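/- Let κ ∈ (0, 1/2) and let R_κ(x) = |x|^{−(1−2κ)/2} ∫₀^∞ t^{−(5−2κ)/4} e^{−t x² − 1/(4t)} dt for x ≠ 0. If 0 < q < 2/(1 − 2κ), then ∫_ℝ R_κ(x)^q dx < ∞. -/

import Mathlib

open MeasureTheory

open Set in
lemma keyineq (x t : ℝ) (ht0 : 0 < t) : |x|/2 ≤ t*x^2 + 1/(8*t) := by
  obtain ⟨u, hu⟩ : ∃ u : ℝ, u = 1/(8*t) := ⟨_, rfl⟩
  rw [← hu]
  have h1 : t * u = 1/8 := by rw [hu]; field_simp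
  have h4 : t^2*|x|^2 = t^2*x^2 := by rw [sq_abs]
  have h2 : 0 ≤ t * ((t*x^2 + u) - |x|/2) := by
    nlinarith [sq_nonneg (t*|x| - 1/4), h4, h1]
  have h3 := (mul_nonneg_iff_of_pos_left ht0).mp h2
  linarith

open Set in
lemma auxA {a : ℝ} (ha1 : a < -1) (ha2 : -2 < a) :
    IntegrableOn (fun t : ℝ => t ^ a * Real.exp (-1/(8*t))) (Set.Ioi 0) := by
  have hmeas : Measurable fun t : ℝ => t ^ a * Real.exp (-1/(8*t)) := by fun_prop
  have hsplit : Set.Ioi (0:ℝ) = Set.Ioc 0 1 ∪ Set.Ioi 1 :=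
    (Set.Ioc_union_Ioi_eq_Ioi zero_le_one).symm
  rw [hsplit, integrableOn_union]
  constructor
  · refine Integrable.mono' (integrable_const (256:ℝ)) hmeas.aestronglyMeasurable.restrict ?_
    filter_upwards [ae_restrict_mem measurableSet_Ioc] with t ht
    obtain ⟨ht0, ht1⟩ := ht
    have hrp : (0:ℝ) < t ^ a := Real.rpow_pos_of_pos ht0 a
    have hexp : Real.exp (-1/(8*t)) ≤ 256 * t^2 := by
      obtain ⟨u, hu⟩ : ∃ u : ℝ, u = 1/(8*t) := ⟨_, rfl⟩
      have hupos : 0 < u := hu ▸ (by positivity)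
      have h1 : u/2 ≤ Real.exp (u/2) := by
        have := Real.add_one_le_exp (u/2); linarith
      have h2 : (u/2)^2 ≤ Real.exp (u/2)^2 := pow_le_pow_left₀ (by positivity) h1 2
      have h3 : Real.exp (u/2)^2 = Real.exp u := by rw [sq, ← Real.exp_add]; ring_nf
      have h4 : u^2/4 ≤ Real.exp u := by nlinarith
      have h5 : Real.exp (-u) ≤ 4/u^2 := by
        rw [Real.exp_neg]
        calc (Real.exp u)⁻¹ ≤ (u^2/4)⁻¹ := inv_anti₀ (by positivity) h4
          _ = 4/u^2 := by field_simp
      have h6 : (4:ℝ)/u^2 = 256 * t^2 := by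
        rw [hu]; field_simp; ring
      calc Real.exp (-1/(8*t)) = Real.exp (-u) := by rw [hu]; ring_nf
        _ ≤ 4/u^2 := h5
        _ = 256 * t^2 := h6
    have hpow : t ^ a * (256 * t^2) = 256 * t ^ (a+2) := by
      rw [Real.rpow_add ht0, show t ^ ((2:ℝ)) = t^2 by
        rw [show ((2:ℝ)) = ((2:ℕ):ℝ) by norm_num, Real.rpow_natCast]]
      ring
    have hle1 : t ^ (a+2) ≤ 1 := Real.rpow_le_one ht0.le ht1 (by linarith)
    have : t ^ a * Real.exp (-1/(8*t)) ≤ 256 := by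
      calc t ^ a * Real.exp (-1/(8*t)) ≤ t ^ a * (256 * t^2) :=
            mul_le_mul_of_nonneg_left hexp hrp.le
        _ = 256 * t ^ (a+2) := hpow
        _ ≤ 256 := by nlinarith
    rw [Real.norm_eq_abs, abs_of_nonneg (by positivity)]
    exact this
  · refine Integrable.mono' (integrableOn_Ioi_rpow_of_lt ha1 one_pos)
      hmeas.aestronglyMeasurable.restrict ?_
    filter_upwards [ae_restrict_mem measurableSet_Ioi] with t ht
    have ht0 : (0:ℝ) < t := lt_trans one_pos ht
    have hrp : (0:ℝ) < t ^ a := Real.rpow_pos_of_pos ht0 a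
    have hexp : Real.exp (-1/(8*t)) ≤ 1 := Real.exp_le_one_iff.mpr (by rw [neg_div]; exact neg_nonpos.mpr (by positivity))
    rw [Real.norm_eq_abs, abs_of_nonneg (by positivity)]
    nlinarith

open Set in
lemma auxB {s c : ℝ} (hs1 : -1 < s) (hc : 0 < c) :
    Integrable (fun x : ℝ => |x| ^ s * Real.exp (-c * |x|)) := by
  have hIoi : IntegrableOn (fun x : ℝ => |x| ^ s * Real.exp (-c * |x|)) (Set.Ioi 0) := by
    refine (integrableOn_rpow_mul_exp_neg_mul_rpow (p := 1) hs1 one_pos hc).congr_fun ?_ measurableSet_Ioi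
    intro x hx
    simp only [Real.rpow_one, abs_of_pos (show (0:ℝ) < x from hx)]
  have hIio : IntegrableOn (fun x : ℝ => |x| ^ s * Real.exp (-c * |x|)) (Set.Iio 0) := by
    have h := (MeasurePreserving.integrableOn_comp_preimage
      (Measure.measurePreserving_neg (volume : Measure ℝ))
      (Homeomorph.neg ℝ).measurableEmbedding).2 hIoi
    have hpre : ((Neg.neg : ℝ → ℝ) ⁻¹' Set.Ioi 0) = Set.Iio 0 := by ext x; simp
    rw [hpre] at h
    refine h.congr_fun ?_ measurableSet_Iio
    intro x _
    simp [Function.comp, abs_neg]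
  have hne : ∀ᵐ x : ℝ, x ∈ Set.Iio 0 ∪ Set.Ioi 0 := by
    have h0 : (volume : Measure ℝ) {0} = 0 := measure_singleton 0
    have := measure_eq_zero_iff_ae_notMem.mp h0
    filter_upwards [this] with x hx
    rcases lt_or_gt_of_ne (by simpa using hx : x ≠ 0) with h | h
    · exact Or.inl h
    · exact Or.inr h
  have hres : (volume : Measure ℝ).restrict (Set.Iio 0 ∪ Set.Ioi 0) = volume :=
    Measure.restrict_eq_self_of_ae_mem hne
  have : IntegrableOn (fun x : ℝ => |x| ^ s * Real.exp (-c * |x|)) (Set.Iio 0 ∪ Set.Ioi 0) :=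
    integrableOn_union.mpr ⟨hIio, hIoi⟩
  rwa [IntegrableOn, hres] at this

/-- Integrability of powers of the kernel `R_κ` : if `0 < q < 2/(1−2κ)`, then
`∫_ℝ R_κ(x)^q dx < ∞`. -/
theorem stmt_6 (κ : ℝ) (hκ : κ ∈ Set.Ioo (0:ℝ) (1/2))
    (R : ℝ → ℝ)
    (hR : ∀ x : ℝ, x ≠ 0 → R x = |x| ^ (-(1 - 2*κ)/2) *
      ∫ t in Set.Ioi (0:ℝ), t ^ (-(5 - 2*κ)/4) * Real.exp (-t*x^2 - 1/(4*t)))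
    (q : ℝ) (hq0 : 0 < q) (hq : q < 2 / (1 - 2*κ)) :
    Integrable (fun x : ℝ => R x ^ q) := by
  obtain ⟨hκ0, hκh⟩ := hκ
  have h12 : 0 < 1 - 2*κ := by linarith
  set a : ℝ := -(5 - 2*κ)/4 with ha_def
  set b : ℝ := -(1 - 2*κ)/2 with hb_def
  have ha1 : a < -1 := by rw [ha_def]; linarith
  have ha2 : -2 < a := by rw [ha_def]; linarith
  have hq2 : (1 - 2*κ) * q < 2 := by
    have := (lt_div_iff₀ h12).mp hq; linarith
  have hbq1 : -1 < b * q := by rw [hb_def]; nlinarith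
  -- kernel constant
  have hC : IntegrableOn (fun t : ℝ => t ^ a * Real.exp (-1/(8*t))) (Set.Ioi 0) := auxA ha1 ha2
  set C : ℝ := ∫ t in Set.Ioi (0:ℝ), t ^ a * Real.exp (-1/(8*t)) with hCdef
  have hC0 : 0 ≤ C :=
    setIntegral_nonneg measurableSet_Ioi fun t ht =>
      mul_nonneg (Real.rpow_nonneg (le_of_lt ht) a) (Real.exp_pos _).le
  have hinner_nonneg : ∀ x : ℝ,
      0 ≤ ∫ t in Set.Ioi (0:ℝ), t ^ a * Real.exp (-t*x^2 - 1/(4*t)) := fun x =>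
    setIntegral_nonneg measurableSet_Ioi fun t ht =>
      mul_nonneg (Real.rpow_nonneg (le_of_lt ht) a) (Real.exp_pos _).le
  have hinner_le : ∀ x : ℝ,
      (∫ t in Set.Ioi (0:ℝ), t ^ a * Real.exp (-t*x^2 - 1/(4*t)))
        ≤ Real.exp (-(1/2) * |x|) * C := by
    intro x
    have hInt : Integrable
        (fun t : ℝ => Real.exp (-(1/2) * |x|) * (t ^ a * Real.exp (-1/(8*t))))
        (volume.restrict (Set.Ioi 0)) := hC.const_mul _
    have h1 : (∫ t in Set.Ioi (0:ℝ), t ^ a * Real.exp (-t*x^2 - 1/(4*t)))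
        ≤ ∫ t in Set.Ioi (0:ℝ), Real.exp (-(1/2) * |x|) * (t ^ a * Real.exp (-1/(8*t))) := by
      refine integral_mono_of_nonneg ?_ hInt ?_
      · filter_upwards [ae_restrict_mem measurableSet_Ioi] with t ht
        exact mul_nonneg (Real.rpow_nonneg (le_of_lt ht) a) (Real.exp_pos _).le
      · filter_upwards [ae_restrict_mem measurableSet_Ioi] with t ht
        have ht0 : (0:ℝ) < t := ht
        have hkey := keyineq x t ht0
        have harg : -t*x^2 - 1/(4*t) ≤ -(1/2)*|x| + -1/(8*t) := by
          ring_nf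
          ring_nf at hkey
          linarith
        calc t ^ a * Real.exp (-t*x^2 - 1/(4*t))
            ≤ t ^ a * Real.exp (-(1/2)*|x| + -1/(8*t)) :=
              mul_le_mul_of_nonneg_left (Real.exp_le_exp.mpr harg)
                (Real.rpow_nonneg ht0.le a)
          _ = Real.exp (-(1/2) * |x|) * (t ^ a * Real.exp (-1/(8*t))) := by
              rw [Real.exp_add]; ring
    calc (∫ t in Set.Ioi (0:ℝ), t ^ a * Real.exp (-t*x^2 - 1/(4*t))) ≤ _ := h1
      _ = Real.exp (-(1/2) * |x|) * C := by rw [integral_const_mul]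
  -- measurability
  have hFm : Measurable fun p : ℝ × ℝ => p.2 ^ a * Real.exp (-p.2*p.1^2 - 1/(4*p.2)) := by
    fun_prop
  have hinner_meas : StronglyMeasurable fun x : ℝ =>
      ∫ t in Set.Ioi (0:ℝ), t ^ a * Real.exp (-t*x^2 - 1/(4*t)) :=
    hFm.stronglyMeasurable.integral_prod_right'
  set g0 : ℝ → ℝ := fun x =>
    (|x| ^ b * ∫ t in Set.Ioi (0:ℝ), t ^ a * Real.exp (-t*x^2 - 1/(4*t))) ^ q with hg0def
  have hg0m : AEStronglyMeasurable g0 volume := by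
    apply Measurable.aestronglyMeasurable
    have h1 : Measurable fun x : ℝ => |x| ^ b := by fun_prop
    have h2 : Measurable fun y : ℝ => y ^ q := by fun_prop
    exact h2.comp (h1.mul hinner_meas.measurable)
  -- domination
  have hdom : ∀ x : ℝ, ‖g0 x‖ ≤ C ^ q * (|x| ^ (b*q) * Real.exp (-(q/2) * |x|)) := by
    intro x
    have h1 : (0:ℝ) ≤ |x| ^ b := Real.rpow_nonneg (abs_nonneg x) b
    have hbase0 : 0 ≤ |x| ^ b * ∫ t in Set.Ioi (0:ℝ), t ^ a * Real.exp (-t*x^2 - 1/(4*t)) :=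
      mul_nonneg h1 (hinner_nonneg x)
    rw [hg0def]
    simp only []
    rw [Real.norm_eq_abs, abs_of_nonneg (Real.rpow_nonneg hbase0 q)]
    have hle : |x| ^ b * (∫ t in Set.Ioi (0:ℝ), t ^ a * Real.exp (-t*x^2 - 1/(4*t)))
        ≤ |x| ^ b * (Real.exp (-(1/2) * |x|) * C) :=
      mul_le_mul_of_nonneg_left (hinner_le x) h1
    calc (|x| ^ b * ∫ t in Set.Ioi (0:ℝ), t ^ a * Real.exp (-t*x^2 - 1/(4*t))) ^ q
        ≤ (|x| ^ b * (Real.exp (-(1/2) * |x|) * C)) ^ q :=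
          Real.rpow_le_rpow hbase0 hle hq0.le
      _ = (|x| ^ b) ^ q * ((Real.exp (-(1/2) * |x|)) ^ q * C ^ q) := by
          rw [Real.mul_rpow h1 (mul_nonneg (Real.exp_pos _).le hC0),
            Real.mul_rpow (Real.exp_pos _).le hC0]
      _ = C ^ q * (|x| ^ (b*q) * Real.exp (-(q/2) * |x|)) := by
          rw [← Real.rpow_mul (abs_nonneg x), ← Real.exp_mul]
          ring_nf
  have hg : Integrable (fun x : ℝ => C ^ q * (|x| ^ (b*q) * Real.exp (-(q/2) * |x|))) :=
    (auxB hbq1 (half_pos hq0)).const_mul _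
  have hg0int : Integrable g0 := hg.mono' hg0m (Filter.Eventually.of_forall hdom)
  refine hg0int.congr ?_
  have hne : ∀ᵐ x : ℝ, x ≠ 0 := by
    have h0 : (volume : Measure ℝ) {0} = 0 := measure_singleton 0
    filter_upwards [measure_eq_zero_iff_ae_notMem.mp h0] with x hx
    simpa using hx
  filter_upwards [hne] with x hx
  rw [hg0def]
  simp only []
  rw [hR x hx]
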